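/- Intermediate decomposition for the quantitative Laplace principle: under the same assumptions, for any r̃ ≥ r > 0 with μ(B_r(v*)) > 0, one has ‖v_α(μ) − v*‖ ≤ r̃ + exp(−α (inf_{v ∉ B_{r̃}(v*)} E(v) − E_r)) / μ(B_r(v*)) · ∫‖v − v*‖ dμ(v). -/

import Mathlib

open MeasureTheory

/-- Intermediate decomposition for the quantitative Laplace principle. -/
theorem stmt_4 (d : ℕ) (E : EuclideanSpace ℝ (Fin d) → ℝ)
    (vstar : EuclideanSpace ℝ (Fin d))
    (hE : Continuous E) (hEnonneg : ∀ v, 0 ≤ E v)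
    (μ : Measure (EuclideanSpace ℝ (Fin d))) [IsProbabilityMeasure μ]
    (hmom : Integrable (fun v => ‖v‖) μ)
    (α : ℝ) (hα : 0 < α)
    (hint1 : Integrable (fun v => Real.exp (-α * E v)) μ)
    (hint2 : Integrable (fun v => Real.exp (-α * E v) • v) μ)
    (r rt : ℝ) (hrpos : 0 < r) (hrt : r ≤ rt)
    (hmass : 0 < (μ (Metric.closedBall vstar r)).toReal) :
    ‖(∫ v, Real.exp (-α * E v) ∂μ)⁻¹ • (∫ v, Real.exp (-α * E v) • v ∂μ) - vstar‖
      ≤ rt + Real.exp (-α * (sInf (E '' (Metric.closedBall vstar rt)ᶜ)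
                - sSup (E '' Metric.closedBall vstar r)))
              / (μ (Metric.closedBall vstar r)).toReal
            * ∫ v, ‖v - vstar‖ ∂μ := by
  set Z := ∫ v, Real.exp (-α * E v) ∂μ with hZdef
  set Er := sSup (E '' Metric.closedBall vstar r) with hErdef
  set l := sInf (E '' (Metric.closedBall vstar rt)ᶜ) with hldef
  set M := ∫ v, ‖v - vstar‖ ∂μ with hMdef
  set mass := (μ (Metric.closedBall vstar r)).toReal with hmassdef
  -- integrability facts
  have hInt_id : Integrable (fun v : EuclideanSpace ℝ (Fin d) => v) μ :=
    (integrable_norm_iff aestronglyMeasurable_id).mp hmom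
  have hInt_sub : Integrable (fun v => v - vstar) μ := hInt_id.sub (integrable_const vstar)
  have hInt_nsub : Integrable (fun v => ‖v - vstar‖) μ := hInt_sub.norm
  have hM0 : 0 ≤ M := integral_nonneg fun v => norm_nonneg _
  -- E ≤ Er on the small ball
  have hErle : ∀ v ∈ Metric.closedBall vstar r, E v ≤ Er := by
    intro v hv
    apply le_csSup
    · exact ((isCompact_closedBall vstar r).image hE).bddAbove
    · exact ⟨v, hv, rfl⟩
  -- l ≤ E outside the big ball
  have hlle : ∀ v, v ∉ Metric.closedBall vstar rt → l ≤ E v := by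
    intro v hv
    apply csInf_le
    · exact ⟨0, by rintro x ⟨w, -, rfl⟩; exact hEnonneg w⟩
    · exact ⟨v, hv, rfl⟩
  -- lower bound on Z
  have hZlower : Real.exp (-α * Er) * mass ≤ Z := by
    have h1 : ∫ v, (Metric.closedBall vstar r).indicator
        (fun _ => Real.exp (-α * Er)) v ∂μ ≤ Z := by
      apply integral_mono
        ((integrable_const (Real.exp (-α * Er))).indicator Metric.isClosed_closedBall.measurableSet)
        hint1
      intro v
      by_cases hv : v ∈ Metric.closedBall vstar r
      · rw [Set.indicator_of_mem hv]
        exact Real.exp_le_exp.mpr (by nlinarith [hErle v hv])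
      · rw [Set.indicator_of_notMem hv]
        positivity
    rwa [integral_indicator_const _ Metric.isClosed_closedBall.measurableSet, smul_eq_mul,
      mul_comm] at h1
  have hZpos : 0 < Z :=
    lt_of_lt_of_le (by positivity) hZlower
  -- rewrite difference
  have hInt_smul : Integrable (fun v => Real.exp (-α * E v) • (v - vstar)) μ := by
    have : (fun v => Real.exp (-α * E v) • (v - vstar))
        = fun v => Real.exp (-α * E v) • v - Real.exp (-α * E v) • vstar := by
      funext v; rw [smul_sub]
    rw [this]
    exact hint2.sub (hint1.smul_const vstar)
  have key : (∫ v, Real.exp (-α * E v) ∂μ)⁻¹ • (∫ v, Real.exp (-α * E v) • v ∂μ) - vstar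
      = Z⁻¹ • ∫ v, Real.exp (-α * E v) • (v - vstar) ∂μ := by
    have h1 : ∫ v, Real.exp (-α * E v) • (v - vstar) ∂μ
        = (∫ v, Real.exp (-α * E v) • v ∂μ) - Z • vstar := by
      have h2 : (fun v => Real.exp (-α * E v) • (v - vstar))
          = fun v => Real.exp (-α * E v) • v - Real.exp (-α * E v) • vstar := by
        funext v; rw [smul_sub]
      rw [h2, integral_sub hint2 (hint1.smul_const vstar), integral_smul_const]
    rw [h1, smul_sub, smul_smul, inv_mul_cancel₀ hZpos.ne', one_smul]
  -- pointwise bound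
  have hptwise : ∀ v, Real.exp (-α * E v) * ‖v - vstar‖
      ≤ rt * Real.exp (-α * E v) + Real.exp (-α * l) * ‖v - vstar‖ := by
    intro v
    by_cases hv : v ∈ Metric.closedBall vstar rt
    · have hd : ‖v - vstar‖ ≤ rt := by
        rw [← dist_eq_norm]; exact Metric.mem_closedBall.mp hv
      nlinarith [Real.exp_pos (-α * E v), Real.exp_pos (-α * l), norm_nonneg (v - vstar)]
    · have hle : Real.exp (-α * E v) ≤ Real.exp (-α * l) :=
        Real.exp_le_exp.mpr (by nlinarith [hlle v hv])
      nlinarith [Real.exp_pos (-α * E v), norm_nonneg (v - vstar),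
        lt_of_lt_of_le hrpos hrt]
  have hInt_f : Integrable (fun v => Real.exp (-α * E v) * ‖v - vstar‖) μ := by
    apply hInt_nsub.bdd_mul (c := 1) (Real.continuous_exp.comp (continuous_const.mul hE)).aestronglyMeasurable
    refine Filter.Eventually.of_forall fun v => ?_
    show ‖Real.exp (-α * E v)‖ ≤ 1
    rw [Real.norm_eq_abs, abs_of_pos (Real.exp_pos _)]
    exact Real.exp_le_exp.mpr (by nlinarith [hEnonneg v]) |>.trans_eq Real.exp_zero
  -- integral bound
  have hIbound : ∫ v, Real.exp (-α * E v) * ‖v - vstar‖ ∂μ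
      ≤ rt * Z + Real.exp (-α * l) * M := by
    have := integral_mono hInt_f
      ((hint1.const_mul rt).add (hInt_nsub.const_mul (Real.exp (-α * l)))) hptwise
    simp only [Pi.add_apply] at this
    rwa [integral_add (hint1.const_mul rt) (hInt_nsub.const_mul _),
      integral_const_mul, integral_const_mul] at this
  -- put together
  have hnormeq : ∀ v : EuclideanSpace ℝ (Fin d),
      ‖Real.exp (-α * E v) • (v - vstar)‖ = Real.exp (-α * E v) * ‖v - vstar‖ := by
    intro v
    rw [norm_smul, Real.norm_eq_abs, abs_of_pos (Real.exp_pos _)]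
  calc ‖(∫ v, Real.exp (-α * E v) ∂μ)⁻¹ • (∫ v, Real.exp (-α * E v) • v ∂μ) - vstar‖
      = Z⁻¹ * ‖∫ v, Real.exp (-α * E v) • (v - vstar) ∂μ‖ := by
        rw [key, norm_smul, Real.norm_eq_abs, abs_of_pos (inv_pos.mpr hZpos)]
    _ ≤ Z⁻¹ * ∫ v, Real.exp (-α * E v) * ‖v - vstar‖ ∂μ := by
        apply mul_le_mul_of_nonneg_left _ (inv_pos.mpr hZpos).le
        calc ‖∫ v, Real.exp (-α * E v) • (v - vstar) ∂μ‖
            ≤ ∫ v, ‖Real.exp (-α * E v) • (v - vstar)‖ ∂μ := norm_integral_le_integral_norm _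
          _ = ∫ v, Real.exp (-α * E v) * ‖v - vstar‖ ∂μ := by
              congr 1; funext v; exact hnormeq v
    _ ≤ Z⁻¹ * (rt * Z + Real.exp (-α * l) * M) :=
        mul_le_mul_of_nonneg_left hIbound (inv_pos.mpr hZpos).le
    _ = rt + Z⁻¹ * (Real.exp (-α * l) * M) := by
        field_simp
    _ ≤ rt + Real.exp (-α * (l - Er)) / mass * M := by
        have hAB : Real.exp (-α * (l - Er)) = Real.exp (-α * l) * Real.exp (α * Er) := by
          rw [← Real.exp_add]; congr 1; ring
        have hZinv : Z⁻¹ ≤ Real.exp (α * Er) / mass := by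
          have h1 : Z⁻¹ ≤ (Real.exp (-α * Er) * mass)⁻¹ :=
            inv_anti₀ (by positivity) hZlower
          have h2 : (Real.exp (-α * Er) * mass)⁻¹ = Real.exp (α * Er) / mass := by
            rw [mul_inv, ← Real.exp_neg, div_eq_mul_inv]
            congr 2; ring
          rwa [h2] at h1
        have h := mul_le_mul_of_nonneg_right hZinv
          (mul_nonneg (Real.exp_pos (-α * l)).le hM0)
        calc rt + Z⁻¹ * (Real.exp (-α * l) * M)
            ≤ rt + Real.exp (α * Er) / mass * (Real.exp (-α * l) * M) := by linarith
          _ = rt + Real.exp (-α * (l - Er)) / mass * M := by rw [hAB]; ring
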